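/- Assume the controlled flow hypothesis. Define the space and velocity barycenters x̄(t) = ∫ x dμ(t)(x, v) and v̄(t) = ∫ v dμ(t)(x, v). Then for every t ≥ 0, x̄ and v̄ are differentiable with x̄'(t) = v̄(t) and v̄'(t) = ∫_{ω(t)} u(t, x, v) dμ(t)(x, v). -/

import Mathlib

set_option linter.unusedSectionVars false
set_option maxHeartbeats 8000000
set_option synthInstance.maxHeartbeats 1000000

open MeasureTheory Metric Set
open scoped Topology

/-- The (topological) support of a measure. -/
def msupp {α : Type*} [TopologicalSpace α] [MeasurableSpace α]
    (μ : Measure α) : Set α :=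
  {x | ∀ U : Set α, IsOpen U → x ∈ U → 0 < μ U}

/-- The Cucker–Smale interaction kernel. -/
noncomputable def xi {d : ℕ} (φ : ℝ → ℝ)
    (μ : Measure (EuclideanSpace ℝ (Fin d) × EuclideanSpace ℝ (Fin d)))
    (x v : EuclideanSpace ℝ (Fin d)) : EuclideanSpace ℝ (Fin d) :=
  ∫ p, φ (‖x - p.1‖) • (p.2 - v) ∂μ

lemma msupp_compl_null {α : Type*} [TopologicalSpace α] [MeasurableSpace α]
    [SecondCountableTopology α] (μ : Measure α) : μ (msupp μ)ᶜ = 0 := by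
  obtain ⟨T, hTc, hTS, hTU⟩ := TopologicalSpace.isOpen_sUnion_countable
    {U : Set α | IsOpen U ∧ μ U = 0} (fun s hs => hs.1)
  have h1 : (msupp μ)ᶜ ⊆ ⋃₀ T := by
    rw [hTU]
    intro x hx
    simp only [msupp, mem_compl_iff, mem_setOf_eq, not_forall] at hx
    obtain ⟨U, hU, hxU, hμU⟩ := hx
    exact ⟨U, ⟨hU, by simpa using hμU⟩, hxU⟩
  exact measure_mono_null h1 ((measure_sUnion_null_iff hTc).2 fun s hs => (hTS hs).2)

section Aux
variable {Z : Type*} [MeasurableSpace Z] [TopologicalSpace Z] [OpensMeasurableSpace Z]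
  [SecondCountableTopology Z]
  {E : Type*} [NormedAddCommGroup E] [NormedSpace ℝ E]

lemma ae_memK {K : Set Z} (μ : Measure Z) (hKc : μ Kᶜ = 0) : ∀ᵐ z ∂μ, z ∈ K := by
  rw [ae_iff]; exact hKc

lemma integrable_K (μ : Measure Z) [IsFiniteMeasure μ] {K : Set Z}
    (hK : IsCompact K) (hKc : μ Kᶜ = 0) {f : Z → E} (hf : Continuous f) :
    Integrable f μ := by
  obtain ⟨C, hC⟩ := hK.exists_bound_of_continuousOn hf.continuousOn
  refine (integrable_const C).mono' hf.aestronglyMeasurable ?_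
  filter_upwards [ae_memK μ hKc] with z hz using hC z hz

lemma cont_param {P : Type*} [TopologicalSpace P] [FirstCountableTopology P]
    [WeaklyLocallyCompactSpace P]
    (μ : Measure Z) [IsFiniteMeasure μ] {K : Set Z} (hK : IsCompact K) (hKc : μ Kᶜ = 0)
    {F : P → Z → E} (hF : Continuous fun q : P × Z => F q.1 q.2) :
    Continuous fun p => ∫ z, F p z ∂μ := by
  rw [continuous_iff_continuousAt]
  intro p₀
  obtain ⟨N, hNc, hNmem⟩ := exists_compact_mem_nhds p₀
  obtain ⟨C, hC⟩ := (hNc.prod hK).exists_bound_of_continuousOn hF.continuousOn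
  refine tendsto_integral_filter_of_dominated_convergence (fun _ => C) ?_ ?_
    (integrable_const C) ?_
  · exact Filter.Eventually.of_forall fun p =>
      (hF.comp (Continuous.prodMk_right p)).aestronglyMeasurable
  · filter_upwards [hNmem] with p hp
    filter_upwards [ae_memK μ hKc] with z hz
    exact hC (p, z) ⟨hp, hz⟩
  · exact Filter.Eventually.of_forall fun z =>
      (hF.comp (continuous_id.prodMk continuous_const)).tendsto p₀

end Aux

theorem stmt10 {d : ℕ} (hd : 0 < d) (φ : ℝ → ℝ) (hφc : Continuous φ)
    (hφa : Antitone φ) (hφp : ∀ r : ℝ, 0 < φ r)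
    (u : ℝ → (EuclideanSpace ℝ (Fin d) × EuclideanSpace ℝ (Fin d)) →
      EuclideanSpace ℝ (Fin d))
    (hub : ∃ C : ℝ, ∀ t p, ‖u t p‖ ≤ C)
    (huc : Continuous fun q : ℝ × (EuclideanSpace ℝ (Fin d) × EuclideanSpace ℝ (Fin d)) =>
      u q.1 q.2)
    (ω : ℝ → Set (EuclideanSpace ℝ (Fin d) × EuclideanSpace ℝ (Fin d)))
    (hωm : ∀ t, MeasurableSet (ω t))
    (hχuc : Continuous fun q : ℝ × (EuclideanSpace ℝ (Fin d) × EuclideanSpace ℝ (Fin d)) =>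
      Set.indicator (ω q.1) (u q.1) q.2)
    (μ0 : Measure (EuclideanSpace ℝ (Fin d) × EuclideanSpace ℝ (Fin d)))
    [IsProbabilityMeasure μ0] (hcs : IsCompact (msupp μ0))
    (Φ : ℝ → (EuclideanSpace ℝ (Fin d) × EuclideanSpace ℝ (Fin d)) →
      EuclideanSpace ℝ (Fin d) × EuclideanSpace ℝ (Fin d))
    (hΦcont : Continuous fun q : ℝ × (EuclideanSpace ℝ (Fin d) × EuclideanSpace ℝ (Fin d)) =>
      Φ q.1 q.2)
    (hΦ0 : Φ 0 = id)
    (hode : ∀ z ∈ msupp μ0, ∀ t : ℝ, 0 ≤ t →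
      HasDerivWithinAt (fun s => Φ s z)
        ((Φ t z).2,
          xi φ (Measure.map (Φ t) μ0) (Φ t z).1 (Φ t z).2
            + Set.indicator (ω t) (u t) (Φ t z)) (Set.Ici 0) t)
    (xbar vbar : ℝ → EuclideanSpace ℝ (Fin d))
    (hxbar : ∀ t, xbar t = ∫ p, p.1 ∂(Measure.map (Φ t) μ0))
    (hvbar : ∀ t, vbar t = ∫ p, p.2 ∂(Measure.map (Φ t) μ0)) :
    ∀ t : ℝ, 0 ≤ t →
      HasDerivWithinAt xbar (vbar t) (Set.Ici 0) t
      ∧ HasDerivWithinAt vbar (∫ p in ω t, u t p ∂(Measure.map (Φ t) μ0))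
          (Set.Ici 0) t := by
  classical
  haveI : BorelSpace ((EuclideanSpace ℝ (Fin d) × EuclideanSpace ℝ (Fin d)) ×
      EuclideanSpace ℝ (Fin d) × EuclideanSpace ℝ (Fin d)) := Prod.borelSpace
  set K := msupp μ0 with hKdef
  have hKnull : μ0 Kᶜ = 0 := msupp_compl_null μ0
  have hae : ∀ᵐ z ∂μ0, z ∈ K := ae_memK μ0 hKnull
  have hΦt : ∀ t, Continuous (Φ t) := fun t => hΦcont.comp (Continuous.prodMk_right t)
  set F := fun (s : ℝ) (z w : EuclideanSpace ℝ (Fin d) × EuclideanSpace ℝ (Fin d)) =>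
    φ ‖(Φ s z).1 - (Φ s w).1‖ • ((Φ s w).2 - (Φ s z).2) with hFdef
  -- joint continuity of F
  have hFc : Continuous fun q : (ℝ × (EuclideanSpace ℝ (Fin d) × EuclideanSpace ℝ (Fin d)))
      × (EuclideanSpace ℝ (Fin d) × EuclideanSpace ℝ (Fin d)) => F q.1.1 q.1.2 q.2 := by
    have h1 : Continuous fun q : (ℝ × (EuclideanSpace ℝ (Fin d) × EuclideanSpace ℝ (Fin d)))
        × (EuclideanSpace ℝ (Fin d) × EuclideanSpace ℝ (Fin d)) => Φ q.1.1 q.1.2 :=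
      hΦcont.comp continuous_fst
    have h2 : Continuous fun q : (ℝ × (EuclideanSpace ℝ (Fin d) × EuclideanSpace ℝ (Fin d)))
        × (EuclideanSpace ℝ (Fin d) × EuclideanSpace ℝ (Fin d)) => Φ q.1.1 q.2 :=
      hΦcont.comp ((continuous_fst.comp continuous_fst).prodMk continuous_snd)
    exact (hφc.comp ((h1.fst.sub h2.fst).norm)).smul (h2.snd.sub h1.snd)
  -- rewriting xi through the pushforward
  have hxi : ∀ (s : ℝ) (x v : EuclideanSpace ℝ (Fin d)),
      xi φ (Measure.map (Φ s) μ0) x v = ∫ w, φ ‖x - (Φ s w).1‖ • ((Φ s w).2 - v) ∂μ0 := by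
    intro s x v
    rw [xi, integral_map (hΦt s).aemeasurable]
    exact Continuous.aestronglyMeasurable
      ((hφc.comp ((continuous_const.sub continuous_fst).norm)).smul
        (continuous_snd.sub continuous_const))
  have hFscAll : ∀ s : ℝ, Continuous fun q :
      (EuclideanSpace ℝ (Fin d) × EuclideanSpace ℝ (Fin d)) ×
      (EuclideanSpace ℝ (Fin d) × EuclideanSpace ℝ (Fin d)) => F s q.1 q.2 := by
    intro s
    simp only [hFdef]
    exact (hφc.comp ((((hΦt s).comp continuous_fst).fst.sub
        ((hΦt s).comp continuous_snd).fst).norm)).smul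
      (((hΦt s).comp continuous_snd).snd.sub ((hΦt s).comp continuous_fst).snd)
  -- the full vector field D
  set D := fun (s : ℝ) (z : EuclideanSpace ℝ (Fin d) × EuclideanSpace ℝ (Fin d)) =>
    (((Φ s z).2 : EuclideanSpace ℝ (Fin d)),
      (∫ w, F s z w ∂μ0) + Set.indicator (ω s) (u s) (Φ s z)) with hDdef
  have hξc : Continuous fun p : ℝ × (EuclideanSpace ℝ (Fin d) × EuclideanSpace ℝ (Fin d)) =>
      ∫ w, F p.1 p.2 w ∂μ0 :=
    cont_param μ0 hcs hKnull hFc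
  have hDc : Continuous fun q : ℝ × (EuclideanSpace ℝ (Fin d) × EuclideanSpace ℝ (Fin d)) =>
      D q.1 q.2 := by
    refine Continuous.prodMk (hΦcont.snd) (hξc.add ?_)
    exact hχuc.comp (continuous_fst.prodMk hΦcont)
  have hDode : ∀ z ∈ K, ∀ t : ℝ, 0 ≤ t →
      HasDerivWithinAt (fun s => Φ s z) (D t z) (Set.Ici 0) t := by
    intro z hz t ht
    have h2 := hode z hz t ht
    rw [hxi t] at h2
    exact h2
  -- pointwise fundamental theorem of calculus
  have hFTC : ∀ z ∈ K, ∀ t : ℝ, 0 ≤ t →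
      Φ t z = z + ∫ s in Set.Ioc 0 t, D s z := by
    intro z hz t ht
    have hcont : ContinuousOn (fun s => Φ s z) (Icc 0 t) :=
      (hΦcont.comp (continuous_id.prodMk continuous_const)).continuousOn
    have hderiv : ∀ s ∈ Ioo 0 t, HasDerivWithinAt (fun r => Φ r z) (D s z) (Ioi s) s := by
      intro s hs
      exact (hDode z hz s hs.1.le).mono fun x hx => (hs.1.trans hx).le
    have hint : IntervalIntegrable (fun s => D s z) volume 0 t :=
      ((hDc.comp (continuous_id.prodMk continuous_const)).intervalIntegrable 0 t)
    have h := intervalIntegral.integral_eq_sub_of_hasDeriv_right_of_le ht hcont hderiv hint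
    rw [intervalIntegral.integral_of_le ht, hΦ0] at h
    rw [h]
    simp
  set Y := fun t : ℝ => ∫ z, Φ t z ∂μ0 with hYdef
  set Dbar := fun s : ℝ => ∫ z, D s z ∂μ0 with hDbardef
  have hDbarc : Continuous Dbar := cont_param μ0 hcs hKnull hDc
  have hνfin : ∀ t : ℝ, IsFiniteMeasure (volume.restrict (Set.Ioc (0:ℝ) t)) := by
    intro t
    constructor
    rw [Measure.restrict_apply_univ]
    exact measure_Ioc_lt_top
  have hYeq : ∀ t : ℝ, 0 ≤ t → Y t = Y 0 + ∫ s in Set.Ioc 0 t, Dbar s := by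
    intro t ht
    haveI := hνfin t
    have hUncCont : Continuous fun q :
        (EuclideanSpace ℝ (Fin d) × EuclideanSpace ℝ (Fin d)) × ℝ => D q.2 q.1 :=
      hDc.comp (continuous_snd.prodMk continuous_fst)
    obtain ⟨C, hC⟩ := (hcs.prod (isCompact_Icc (a := (0:ℝ)) (b := t))).exists_bound_of_continuousOn
      hUncCont.continuousOn
    have hprod1 : ∀ᵐ q ∂(μ0.prod (volume.restrict (Set.Ioc 0 t))), q.1 ∈ K := by
      have he : {q : (EuclideanSpace ℝ (Fin d) × EuclideanSpace ℝ (Fin d)) × ℝ |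
          ¬ q.1 ∈ K} = Kᶜ ×ˢ univ := by ext q; simp
      rw [ae_iff, he, Measure.prod_prod, hKnull, zero_mul]
    have hprod2 : ∀ᵐ q ∂(μ0.prod (volume.restrict (Set.Ioc 0 t))), q.2 ∈ Set.Ioc 0 t := by
      have he : {q : (EuclideanSpace ℝ (Fin d) × EuclideanSpace ℝ (Fin d)) × ℝ |
          ¬ q.2 ∈ Set.Ioc 0 t} = univ ×ˢ (Set.Ioc 0 t)ᶜ := by ext q; simp
      rw [ae_iff, he, Measure.prod_prod,
        Measure.restrict_apply measurableSet_Ioc.compl]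
      simp
    have hUncInt : Integrable (fun q :
        (EuclideanSpace ℝ (Fin d) × EuclideanSpace ℝ (Fin d)) × ℝ => D q.2 q.1)
        (μ0.prod (volume.restrict (Set.Ioc 0 t))) := by
      refine (integrable_const C).mono' hUncCont.aestronglyMeasurable ?_
      filter_upwards [hprod1, hprod2] with q h1 h2
      exact hC q ⟨h1, ⟨h2.1.le, h2.2⟩⟩
    have hswap := MeasureTheory.integral_integral_swap (f := fun z s => D s z) hUncInt
    have hint2 : Integrable (fun z => ∫ s in Set.Ioc 0 t, D s z) μ0 :=
      hUncInt.integral_prod_left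
    calc Y t = ∫ z, (z + ∫ s in Set.Ioc 0 t, D s z) ∂μ0 :=
          integral_congr_ae (by filter_upwards [hae] with z hz using hFTC z hz t ht)
      _ = (∫ z, z ∂μ0) + ∫ z, (∫ s in Set.Ioc 0 t, D s z) ∂μ0 :=
          integral_add (integrable_K μ0 hcs hKnull continuous_id) hint2
      _ = Y 0 + ∫ s in Set.Ioc 0 t, Dbar s := by
          rw [hswap]
          congr 1
          simp [hYdef, hΦ0]
  have hYd : ∀ t : ℝ, 0 ≤ t → HasDerivWithinAt Y (Dbar t) (Set.Ici 0) t := by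
    intro t ht
    have hG : HasDerivAt (fun r => Y 0 + ∫ s in (0:ℝ)..r, Dbar s) (Dbar t) t := by
      have h := intervalIntegral.integral_hasDerivAt_right
        (hDbarc.intervalIntegrable 0 t)
        (hDbarc.stronglyMeasurableAtFilter volume (𝓝 t))
        hDbarc.continuousAt
      exact h.const_add (Y 0)
    refine hG.hasDerivWithinAt.congr ?_ ?_
    · intro r hr
      rw [intervalIntegral.integral_of_le (mem_Ici.mp hr)]
      exact hYeq r (mem_Ici.mp hr)
    · rw [intervalIntegral.integral_of_le ht]
      exact hYeq t ht
  have hA0 : ∀ s : ℝ, (∫ z, ∫ w, F s z w ∂μ0 ∂μ0) = 0 := by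
    intro s
    obtain ⟨C, hC⟩ := (hcs.prod hcs).exists_bound_of_continuousOn (hFscAll s).continuousOn
    have hprod1 : ∀ᵐ q ∂(μ0.prod μ0), q.1 ∈ K := by
      have he : {q : (EuclideanSpace ℝ (Fin d) × EuclideanSpace ℝ (Fin d)) ×
          (EuclideanSpace ℝ (Fin d) × EuclideanSpace ℝ (Fin d)) |
          ¬ q.1 ∈ K} = Kᶜ ×ˢ univ := by ext q; simp
      rw [ae_iff, he, Measure.prod_prod, hKnull, zero_mul]
    have hprod2 : ∀ᵐ q ∂(μ0.prod μ0), q.2 ∈ K := by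
      have he : {q : (EuclideanSpace ℝ (Fin d) × EuclideanSpace ℝ (Fin d)) ×
          (EuclideanSpace ℝ (Fin d) × EuclideanSpace ℝ (Fin d)) |
          ¬ q.2 ∈ K} = univ ×ˢ Kᶜ := by ext q; simp
      rw [ae_iff, he, Measure.prod_prod, hKnull, mul_zero]
    have hFi : Integrable (fun q :
        (EuclideanSpace ℝ (Fin d) × EuclideanSpace ℝ (Fin d)) ×
        (EuclideanSpace ℝ (Fin d) × EuclideanSpace ℝ (Fin d)) => F s q.1 q.2)
        (μ0.prod μ0) := by
      refine (integrable_const C).mono' (hFscAll s).aestronglyMeasurable ?_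
      filter_upwards [hprod1, hprod2] with q h1 h2
      exact hC q ⟨h1, h2⟩
    have hswap := MeasureTheory.integral_integral_swap (f := fun z w => F s z w) hFi
    have hanti : ∀ z w, F s z w = -F s w z := by
      intro z w
      simp only [hFdef]
      rw [norm_sub_rev, ← smul_neg, neg_sub]
    have hstep : (∫ w, ∫ z, F s z w ∂μ0 ∂μ0) = -(∫ z, ∫ w, F s z w ∂μ0 ∂μ0) := by
      have h1 : ∀ w, (∫ z, F s z w ∂μ0) = -∫ z, F s w z ∂μ0 := by
        intro w
        rw [show (fun z => F s z w) = fun z => -F s w z from funext fun z => hanti z w]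
        exact integral_neg _
      simp_rw [h1]
      exact integral_neg _
    have hI := hswap.trans hstep
    have h2 : (2:ℝ) • (∫ z, ∫ w, F s z w ∂μ0 ∂μ0) = 0 := by
      rw [two_smul]
      nth_rewrite 2 [hI]
      simp
    simpa using (smul_eq_zero.mp h2).resolve_left (by norm_num)
  intro t ht
  have hYd' := hYd t ht
  have hintD : Integrable (D t) μ0 :=
    integrable_K μ0 hcs hKnull (hDc.comp (Continuous.prodMk_right t))
  set L1 := ContinuousLinearMap.fst ℝ (EuclideanSpace ℝ (Fin d)) (EuclideanSpace ℝ (Fin d))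
    with hL1def
  set L2 := ContinuousLinearMap.snd ℝ (EuclideanSpace ℝ (Fin d)) (EuclideanSpace ℝ (Fin d))
    with hL2def
  have hxY : xbar = fun r => L1 (Y r) := by
    funext r
    simp only [hYdef]
    rw [hxbar r, integral_map (hΦt r).aemeasurable continuous_fst.aestronglyMeasurable,
      ← ContinuousLinearMap.integral_comp_comm L1 (integrable_K μ0 hcs hKnull (hΦt r))]
    simp only [hL1def, ContinuousLinearMap.coe_fst']
  have hvY : vbar = fun r => L2 (Y r) := by
    funext r
    simp only [hYdef]
    rw [hvbar r, integral_map (hΦt r).aemeasurable continuous_snd.aestronglyMeasurable,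
      ← ContinuousLinearMap.integral_comp_comm L2 (integrable_K μ0 hcs hKnull (hΦt r))]
    simp only [hL2def, ContinuousLinearMap.coe_snd']
  have hL1D : L1 (Dbar t) = vbar t := by
    rw [← ContinuousLinearMap.integral_comp_comm L1 hintD]
    rw [hvbar t, integral_map (hΦt t).aemeasurable continuous_snd.aestronglyMeasurable]
    simp only [hL1def, ContinuousLinearMap.coe_fst', hDdef]
  have hint_ξ : Integrable (fun z => ∫ w, F t z w ∂μ0) μ0 :=
    integrable_K μ0 hcs hKnull (cont_param μ0 hcs hKnull (hFscAll t))
  have hint_χ : Integrable (fun z => Set.indicator (ω t) (u t) (Φ t z)) μ0 :=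
    integrable_K μ0 hcs hKnull (hχuc.comp (continuous_const.prodMk (hΦt t)))
  have hL2D : L2 (Dbar t) = ∫ p in ω t, u t p ∂(Measure.map (Φ t) μ0) := by
    rw [← ContinuousLinearMap.integral_comp_comm L2 hintD]
    have he : (fun z => L2 (D t z)) = fun z =>
        (∫ w, F t z w ∂μ0) + Set.indicator (ω t) (u t) (Φ t z) := by
      funext z
      simp only [hL2def, ContinuousLinearMap.coe_snd', hDdef]
    rw [he, integral_add hint_ξ hint_χ, hA0 t, zero_add]
    rw [← MeasureTheory.integral_indicator (hωm t)]
    exact (integral_map (hΦt t).aemeasurable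
      (((huc.comp (continuous_const.prodMk continuous_id)).stronglyMeasurable.indicator
        (hωm t)).aestronglyMeasurable)).symm
  constructor
  · rw [hxY, ← hL1D]
    exact (ContinuousLinearMap.hasFDerivAt (f := L1)).comp_hasDerivWithinAt t hYd'
  · rw [hvY, ← hL2D]
    exact (ContinuousLinearMap.hasFDerivAt (f := L2)).comp_hasDerivWithinAt t hYd'
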